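/- Let β be a braid word with inversion datum ι, let β̄ = ((k_1,−ε_1),…,(k_m,−ε_m)) be the mirror braid word, and define ῑ := −ι. Then: (i) ῑ is an inversion datum on β̄; (ii) the map s ↦ −s−1 is a bijection from Ω(β,ι) to Ω(β̄,ῑ) satisfying d_x(−s−1) (computed for β̄) = d_x(s) (computed for β) for every valid state s; (iii) if (β,ι) is nice then (β̄,ῑ) is nice; and (iv) ℓ(β̄,ῑ) = −ℓ(β,ι). -/
import Mathlib


/-- A braid word on `n` strands with `m` letters. Strand positions are 0-indexed:
the index `p : Fin n` represents the mathematical position `p+1 ∈ {1,…,n}`.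
The `t`-th letter is a crossing of sign `ε t` involving the strand positions
`k t` and `k t + 1` (i.e. mathematical positions `k t + 1` and `k t + 2`). -/
structure BraidWord (n m : ℕ) where
  k : Fin m → ℕ
  hk : ∀ t, k t + 1 < n
  ε : Fin m → ℤ
  hε : ∀ t, ε t = 1 ∨ ε t = -1

namespace BraidWord

variable {n m : ℕ}

/-- Segments of the closed braid diagram: `(p, t)` is the segment at horizontal
position `p` (0-indexed) and level `t` (mod `m`); the `t`-th letter has its bottom
at level `t` and its top at level `t+1`, and `(p, 0)` is the `p`-th closure segment. -/
abbrev Seg (n m : ℕ) := Fin n × Fin m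

/-- Segment adjacent to the `t`-th crossing at the bottom left. -/
def eBL (β : BraidWord n m) (t : Fin m) : Seg n m :=
  (⟨β.k t, by have := β.hk t; omega⟩, t)

/-- Segment adjacent to the `t`-th crossing at the bottom right. -/
def eBR (β : BraidWord n m) (t : Fin m) : Seg n m :=
  (⟨β.k t + 1, β.hk t⟩, t)

/-- Segment adjacent to the `t`-th crossing at the top left. -/
def eTL [NeZero m] (β : BraidWord n m) (t : Fin m) : Seg n m :=
  (⟨β.k t, by have := β.hk t; omega⟩, t + 1)

/-- Segment adjacent to the `t`-th crossing at the top right. -/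
def eTR [NeZero m] (β : BraidWord n m) (t : Fin m) : Seg n m :=
  (⟨β.k t + 1, β.hk t⟩, t + 1)

/-- The writhe of a braid word: the sum of the signs of its crossings. -/
def writhe (β : BraidWord n m) : ℤ := ∑ t, β.ε t

/-- The allowed sign patterns `(BL, BR, TL, TR)` around a crossing of sign `e`. -/
def allowedQuad (e a b c d : ℤ) : Prop :=
  if e = 1 then
    (a = 1 ∧ b = -1 ∧ c = -1 ∧ d = 1) ∨ (a = -1 ∧ b = 1 ∧ c = 1 ∧ d = -1) ∨
    (a = -1 ∧ b = -1 ∧ c = -1 ∧ d = -1) ∨ (a = -1 ∧ b = 1 ∧ c = -1 ∧ d = 1) ∨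
    (a = 1 ∧ b = 1 ∧ c = 1 ∧ d = 1)
  else
    (a = 1 ∧ b = -1 ∧ c = -1 ∧ d = 1) ∨ (a = -1 ∧ b = 1 ∧ c = 1 ∧ d = -1) ∨
    (a = -1 ∧ b = -1 ∧ c = -1 ∧ d = -1) ∨ (a = 1 ∧ b = -1 ∧ c = 1 ∧ d = -1) ∨
    (a = 1 ∧ b = 1 ∧ c = 1 ∧ d = 1)

/-- An inversion datum on a braid word: a `±1`-assignment to each segment,
constant along strands away from crossings, with allowed patterns at crossings. -/
def IsInvDatum [NeZero m] (β : BraidWord n m) (ι : Seg n m → ℤ) : Prop :=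
  (∀ e : Seg n m, ι e = 1 ∨ ι e = -1) ∧
  (∀ (p : Fin n) (t : Fin m), p.val ≠ β.k t → p.val ≠ β.k t + 1 → ι (p, t) = ι (p, t + 1)) ∧
  (∀ t : Fin m, allowedQuad (β.ε t) (ι (β.eBL t)) (ι (β.eBR t)) (ι (β.eTL t)) (ι (β.eTR t)))

/-- A state on a braid word: an integer assignment to each segment, constant along
strands away from crossings, conserved at each crossing. -/
def IsState [NeZero m] (β : BraidWord n m) (s : Seg n m → ℤ) : Prop :=
  (∀ (p : Fin n) (t : Fin m), p.val ≠ β.k t → p.val ≠ β.k t + 1 → s (p, t) = s (p, t + 1)) ∧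
  (∀ t : Fin m, s (β.eBL t) + s (β.eBR t) = s (β.eTL t) + s (β.eTR t))

/-- The sign of an integer, with the convention that the sign of `0` is `+1`. -/
def isign (a : ℤ) : ℤ := if 0 ≤ a then 1 else -1

/-- A state is valid for an inversion datum `ι` if its signs agree with `ι` and the
inequalities required for the extended `R`-matrix to be nonzero hold at each crossing. -/
def IsValid [NeZero m] (β : BraidWord n m) (ι s : Seg n m → ℤ) : Prop :=
  β.IsState s ∧ (∀ e : Seg n m, isign (s e) = ι e) ∧
  ∀ t : Fin m,
    if β.ε t = 1 then s (β.eTR t) ≤ s (β.eBL t) ∨ (0 ≤ s (β.eTR t) ∧ s (β.eBL t) < 0)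
    else s (β.eTL t) ≤ s (β.eBR t) ∨ (0 ≤ s (β.eTL t) ∧ s (β.eBR t) < 0)

/-- The ground state associated to an inversion datum: `s₀(e) = (ι(e) - 1)/2 ∈ {0, -1}`. -/
def groundState (ι : Seg n m → ℤ) : Seg n m → ℤ := fun e => (ι e - 1) / 2

/-- The (minimal) x-degree of a state:
`d_x(s) = -(n-1)/2 + ∑_t ε_t (s(e_BR(t)) + s(e_TR(t)) + 1)/2`. -/
def xdeg [NeZero m] (β : BraidWord n m) (s : Seg n m → ℤ) : ℚ :=
  -((n : ℚ) - 1) / 2 +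
    ∑ t : Fin m, (β.ε t : ℚ) * (((s (β.eBR t) : ℚ) + (s (β.eTR t) : ℚ) + 1) / 2)

/-- A pair (braid word, inversion datum) is nice if every valid state has nonnegative
x-degree and only finitely many valid states have x-degree below any given bound. -/
def IsNice [NeZero m] (β : BraidWord n m) (ι : Seg n m → ℤ) : Prop :=
  (∀ s, β.IsValid ι s → 0 ≤ β.xdeg s) ∧
  ∀ M : ℝ, {s : Seg n m → ℤ | β.IsValid ι s ∧ ((β.xdeg s : ℚ) : ℝ) ≤ M}.Finite

/-- The invariant `ℓ(β,ι) = -∑_{p=2}^{n} ι(b_p)/2 + ∑_t ε_t (1 + ι(e_BR(t))·ι(e_TR(t)))/4`. -/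
def ell [NeZero m] (β : BraidWord n m) (ι : Seg n m → ℤ) : ℚ :=
  -(∑ p : Fin n, if p.val = 0 then 0 else (ι (p, 0) : ℚ)) / 2 +
    ∑ t : Fin m, (β.ε t : ℚ) * ((1 + (ι (β.eBR t) : ℚ) * (ι (β.eTR t) : ℚ)) / 4)

end BraidWord

/-- The mirror braid word: every crossing sign is flipped. -/
def BraidWord.mirror {n m : ℕ} (β : BraidWord n m) : BraidWord n m :=
  ⟨β.k, β.hk, fun t => -β.ε t, fun t => by rcases β.hε t with h | h <;> simp [h]⟩


namespace BraidWord

lemma mirror_mirror {n m : ℕ} (β : BraidWord n m) : β.mirror.mirror = β := by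
  cases β; simp [mirror]

@[simp] lemma mirror_k {n m : ℕ} (β : BraidWord n m) : β.mirror.k = β.k := rfl
@[simp] lemma mirror_ε {n m : ℕ} (β : BraidWord n m) (t : Fin m) :
    β.mirror.ε t = -β.ε t := rfl
@[simp] lemma mirror_eBL {n m : ℕ} (β : BraidWord n m) (t : Fin m) :
    β.mirror.eBL t = β.eBL t := rfl
@[simp] lemma mirror_eBR {n m : ℕ} (β : BraidWord n m) (t : Fin m) :
    β.mirror.eBR t = β.eBR t := rfl
@[simp] lemma mirror_eTL {n m : ℕ} [NeZero m] (β : BraidWord n m) (t : Fin m) :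
    β.mirror.eTL t = β.eTL t := rfl
@[simp] lemma mirror_eTR {n m : ℕ} [NeZero m] (β : BraidWord n m) (t : Fin m) :
    β.mirror.eTR t = β.eTR t := rfl

lemma isign_flip (a : ℤ) : isign (-a - 1) = -isign a := by
  unfold isign; split_ifs <;> omega

lemma allowedQuad_pos {a b c d : ℤ} (h : allowedQuad 1 a b c d) :
    (a = 1 ∧ b = -1 ∧ c = -1 ∧ d = 1) ∨ (a = -1 ∧ b = 1 ∧ c = 1 ∧ d = -1) ∨
    (a = -1 ∧ b = -1 ∧ c = -1 ∧ d = -1) ∨ (a = -1 ∧ b = 1 ∧ c = -1 ∧ d = 1) ∨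
    (a = 1 ∧ b = 1 ∧ c = 1 ∧ d = 1) := by
  unfold allowedQuad at h; rwa [if_pos rfl] at h

lemma allowedQuad_negone {a b c d : ℤ} (h : allowedQuad (-1) a b c d) :
    (a = 1 ∧ b = -1 ∧ c = -1 ∧ d = 1) ∨ (a = -1 ∧ b = 1 ∧ c = 1 ∧ d = -1) ∨
    (a = -1 ∧ b = -1 ∧ c = -1 ∧ d = -1) ∨ (a = 1 ∧ b = -1 ∧ c = 1 ∧ d = -1) ∨
    (a = 1 ∧ b = 1 ∧ c = 1 ∧ d = 1) := by
  unfold allowedQuad at h; rwa [if_neg (by decide)] at h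

lemma allowedQuad_mirror {e a b c d : ℤ} (he : e = 1 ∨ e = -1)
    (h : allowedQuad e a b c d) : allowedQuad (-e) (-a) (-b) (-c) (-d) := by
  rcases he with he | he <;> subst he
  · have h' := allowedQuad_pos h
    unfold allowedQuad
    rcases h' with ⟨rfl, rfl, rfl, rfl⟩ | ⟨rfl, rfl, rfl, rfl⟩ | ⟨rfl, rfl, rfl, rfl⟩ |
      ⟨rfl, rfl, rfl, rfl⟩ | ⟨rfl, rfl, rfl, rfl⟩ <;> norm_num
  · have h' := allowedQuad_negone h
    unfold allowedQuad
    rcases h' with ⟨rfl, rfl, rfl, rfl⟩ | ⟨rfl, rfl, rfl, rfl⟩ | ⟨rfl, rfl, rfl, rfl⟩ |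
      ⟨rfl, rfl, rfl, rfl⟩ | ⟨rfl, rfl, rfl, rfl⟩ <;> norm_num

lemma invdatum_mirror {n m : ℕ} [NeZero m] (β : BraidWord n m) (ι : Seg n m → ℤ)
    (hι : β.IsInvDatum ι) : β.mirror.IsInvDatum (fun e => -ι e) := by
  obtain ⟨h1, h2, h3⟩ := hι
  refine ⟨fun e => by rcases h1 e with h | h <;> simp [h],
    fun p t hp1 hp2 => by
      simp only [mirror_k] at hp1 hp2
      simp only [neg_inj]; exact h2 p t hp1 hp2, fun t => ?_⟩
  have quad := h3 t
  show allowedQuad (-β.ε t) (-ι (β.eBL t)) (-ι (β.eBR t)) (-ι (β.eTL t)) (-ι (β.eTR t))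
  exact allowedQuad_mirror (β.hε t) quad

lemma valid_mirror {n m : ℕ} [NeZero m] (β : BraidWord n m) (ι s : Seg n m → ℤ)
    (hι : β.IsInvDatum ι) (h : β.IsValid ι s) :
    β.mirror.IsValid (fun e => -ι e) (fun e => -s e - 1) := by
  obtain ⟨⟨hs1, hs2⟩, hsign, hineq⟩ := h
  refine ⟨⟨fun p t hp1 hp2 => by
      simp only [mirror_k] at hp1 hp2
      have := hs1 p t hp1 hp2
      show -s (p, t) - 1 = -s (p, t + 1) - 1; omega,
    fun t => by
      have := hs2 t
      show -s (β.eBL t) - 1 + (-s (β.eBR t) - 1) = -s (β.eTL t) - 1 + (-s (β.eTR t) - 1)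
      omega⟩,
    fun e => by rw [isign_flip, hsign], fun t => ?_⟩
  have quad := hι.2.2 t
  have hcons := hs2 t
  have hie := hineq t
  have hA := hsign (β.eBL t); have hB := hsign (β.eBR t)
  have hC := hsign (β.eTL t); have hD := hsign (β.eTR t)
  unfold isign at hA hB hC hD
  rcases β.hε t with he | he
  · rw [he] at quad hie
    rw [if_pos rfl] at hie
    have quad' := allowedQuad_pos quad
    rw [if_neg (show ¬β.mirror.ε t = 1 by rw [mirror_ε, he]; decide)]
    show -s (β.eTL t) - 1 ≤ -s (β.eBR t) - 1 ∨
      (0 ≤ -s (β.eTL t) - 1 ∧ -s (β.eBR t) - 1 < 0)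
    split_ifs at hA hB hC hD <;> omega
  · rw [he] at quad hie
    rw [if_neg (by decide)] at hie
    have quad' := allowedQuad_negone quad
    rw [if_pos (show β.mirror.ε t = 1 by rw [mirror_ε, he]; decide)]
    show -s (β.eTR t) - 1 ≤ -s (β.eBL t) - 1 ∨
      (0 ≤ -s (β.eTR t) - 1 ∧ -s (β.eBL t) - 1 < 0)
    split_ifs at hA hB hC hD <;> omega

lemma xdeg_mirror {n m : ℕ} [NeZero m] (β : BraidWord n m) (s : Seg n m → ℤ) :
    β.mirror.xdeg (fun e => -s e - 1) = β.xdeg s := by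
  unfold xdeg
  congr 1
  refine Finset.sum_congr rfl fun t _ => ?_
  simp only [mirror_ε, mirror_eBR, mirror_eTR]
  push_cast
  ring

lemma ell_mirror {n m : ℕ} [NeZero m] (β : BraidWord n m) (ι : Seg n m → ℤ) :
    β.mirror.ell (fun e => -ι e) = -β.ell ι := by
  unfold ell
  have h1 : ∑ p : Fin n, (if p.val = 0 then 0 else (((-ι (p, 0) : ℤ)) : ℚ)) =
      -∑ p : Fin n, (if p.val = 0 then (0 : ℚ) else ((ι (p, 0) : ℤ) : ℚ)) := by
    rw [← Finset.sum_neg_distrib]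
    refine Finset.sum_congr rfl fun p _ => ?_
    split_ifs <;> push_cast <;> ring
  have h2 : ∑ t : Fin m, ((β.mirror.ε t : ℚ) *
        ((1 + ((fun e => -ι e) (β.mirror.eBR t) : ℚ) * ((fun e => -ι e) (β.mirror.eTR t) : ℚ)) / 4)) =
      -∑ t : Fin m, ((β.ε t : ℚ) * ((1 + (ι (β.eBR t) : ℚ) * (ι (β.eTR t) : ℚ)) / 4)) := by
    rw [← Finset.sum_neg_distrib]
    refine Finset.sum_congr rfl fun t _ => ?_
    simp only [mirror_ε, mirror_eBR, mirror_eTR]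
    push_cast
    ring
  rw [h2]
  push_cast at h1 ⊢
  rw [h1]
  ring

end BraidWord

/-- Mirroring: `-ι` is an inversion datum on the mirror braid word;
`s ↦ -s-1` is an x-degree preserving bijection between valid states; niceness is
preserved; and `ℓ(β̄, -ι) = -ℓ(β, ι)`. -/
theorem mirror_inversion_datum (n m : ℕ) [NeZero m] (β : BraidWord n m)
    (ι : BraidWord.Seg n m → ℤ) (hι : β.IsInvDatum ι) :
    β.mirror.IsInvDatum (fun e => -ι e) ∧
    Set.BijOn (fun s : BraidWord.Seg n m → ℤ => fun e => -s e - 1)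
      {s | β.IsValid ι s} {s | β.mirror.IsValid (fun e => -ι e) s} ∧
    (∀ s : BraidWord.Seg n m → ℤ, β.IsValid ι s →
      β.mirror.xdeg (fun e => -s e - 1) = β.xdeg s) ∧
    (β.IsNice ι → β.mirror.IsNice (fun e => -ι e)) ∧
    β.mirror.ell (fun e => -ι e) = -β.ell ι := by
  have hι' := β.invdatum_mirror ι hι
  have hback : ∀ s, β.mirror.IsValid (fun e => -ι e) s →
      β.IsValid ι (fun e => -s e - 1) := by
    intro s hs
    have := β.mirror.valid_mirror (fun e => -ι e) s hι' hs
    rw [BraidWord.mirror_mirror] at this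
    simpa using this
  have hinv : ∀ s : BraidWord.Seg n m → ℤ,
      (fun e => -(-s e - 1) - 1) = s := by
    intro s; funext e; ring
  refine ⟨hι', ⟨fun s hs => β.valid_mirror ι s hι hs, ?_, ?_⟩,
    fun s _ => β.xdeg_mirror s, ?_, β.ell_mirror ι⟩
  · intro s₁ _ s₂ _ hfe
    have := congrArg (fun s : BraidWord.Seg n m → ℤ => fun e => -s e - 1) hfe
    simpa [hinv] using this
  · intro s hs
    exact ⟨fun e => -s e - 1, hback s hs, hinv s⟩
  · rintro ⟨hpos, hfin⟩
    constructor
    · intro s hs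
      rw [← hinv s, β.xdeg_mirror]
      exact hpos _ (hback s hs)
    · intro M
      refine ((hfin M).image (fun s : BraidWord.Seg n m → ℤ => fun e => -s e - 1)).subset ?_
      rintro s ⟨hs, hM⟩
      refine ⟨fun e => -s e - 1, ⟨hback s hs, ?_⟩, hinv s⟩
      rwa [show β.xdeg (fun e => -s e - 1) = β.mirror.xdeg s from by
        rw [← β.mirror.xdeg_mirror s, BraidWord.mirror_mirror]]
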